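/- Let X and X̃ be Banach spaces with a continuous embedding X̃ ⊂ X*. Let Q : X → K be the quadratic function Q(x) = ½⟨x, A x⟩ defined by a bounded symmetric operator A : X → X̃ whose kernel is complemented in X and whose range is all of X̃. Then there is a constant C > 0 such that ‖Q'(x)‖_{X̃} ≥ C |Q(x)|^{1/2} for all x ∈ X, i.e. Q satisfies the Łojasiewicz gradient inequality globally with exponent one half. -/

import Mathlib

/-- Łojasiewicz gradient inequality with exponent one half for quadratic forms: if
`Q(x) = ½⟨x, A x⟩` is defined by a bounded symmetric operator `A : X → X̃ ⊂ X*` whose kernel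
is complemented in `X` and whose range is all of `X̃`, then there is `C > 0` with
`‖Q'(x)‖_{X̃} = ‖A x‖_{X̃} ≥ C |Q(x)|^{1/2}` for all `x ∈ X`. -/
theorem quadratic_form_lojasiewicz_half {𝕜 X X' : Type*} [RCLike 𝕜]
    [NormedAddCommGroup X] [NormedSpace 𝕜 X] [CompleteSpace X]
    [NormedAddCommGroup X'] [NormedSpace 𝕜 X'] [CompleteSpace X']
    (j : X' →L[𝕜] StrongDual 𝕜 X) (hj : Function.Injective j)
    (A : X →L[𝕜] X')
    (hA : ∀ x y : X, j (A x) y = j (A y) x)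
    (X₀ : Submodule 𝕜 X) (hX₀ : IsClosed (X₀ : Set X))
    (hcompl : IsCompl X₀ (LinearMap.ker (A : X →ₗ[𝕜] X')))
    (hrange : LinearMap.range (A : X →ₗ[𝕜] X') = (⊤ : Submodule 𝕜 X')) :
    ∃ C : ℝ, 0 < C ∧ ∀ x : X,
      C * ‖(2 : 𝕜)⁻¹ * j (A x) x‖ ^ ((1 : ℝ) / 2) ≤ ‖A x‖ := by
  haveI : CompleteSpace X₀ := hX₀.completeSpace_coe
  set A₀ : X₀ →L[𝕜] X' := A.comp X₀.subtypeL with hA₀def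
  have hA₀app : ∀ m : X₀, A₀ m = A (m : X) := fun m => rfl
  have hker : LinearMap.ker (A₀ : X₀ →ₗ[𝕜] X') = ⊥ := by
    rw [LinearMap.ker_eq_bot']
    intro m hm
    have hmem : (m : X) ∈ LinearMap.ker (A : X →ₗ[𝕜] X') := by
      simpa [LinearMap.mem_ker, hA₀app] using hm
    exact Subtype.ext ((Submodule.disjoint_def.mp hcompl.disjoint) m m.2 hmem)
  have hsurj : LinearMap.range (A₀ : X₀ →ₗ[𝕜] X') = ⊤ := by
    rw [LinearMap.range_eq_top]
    intro y
    obtain ⟨x, hx⟩ : ∃ x, A x = y := by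
      have : y ∈ LinearMap.range (A : X →ₗ[𝕜] X') := hrange ▸ Submodule.mem_top
      exact this
    obtain ⟨a, ha, b, hb, hab⟩ := Submodule.mem_sup.mp
      (hcompl.sup_eq_top ▸ Submodule.mem_top : x ∈ X₀ ⊔ LinearMap.ker (A : X →ₗ[𝕜] X'))
    refine ⟨⟨a, ha⟩, ?_⟩
    have hb0 : A b = 0 := hb
    have hAx : A x = A a := by rw [← hab]; simp [hb0]
    show A a = y
    rw [← hAx, hx]
  let e := ContinuousLinearEquiv.ofBijective A₀ hker hsurj
  set M := ‖(e.symm : X' →L[𝕜] X₀)‖ with hMdef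
  have hM0 : 0 ≤ M := norm_nonneg _
  have hbound : ∀ m : X₀, ‖m‖ ≤ M * ‖A₀ m‖ := by
    intro m
    calc ‖m‖ = ‖e.symm (e m)‖ := by rw [e.symm_apply_apply]
    _ ≤ M * ‖e m‖ := (e.symm : X' →L[𝕜] X₀).le_opNorm _
    _ = M * ‖A₀ m‖ := rfl
  set K : ℝ := 2⁻¹ * ‖j‖ * M + 1 with hKdef
  have hK0 : 0 < K := by positivity
  refine ⟨(Real.sqrt K)⁻¹, by positivity, fun x => ?_⟩
  obtain ⟨a, ha, b, hb, hab⟩ := Submodule.mem_sup.mp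
    (hcompl.sup_eq_top ▸ Submodule.mem_top : x ∈ X₀ ⊔ LinearMap.ker (A : X →ₗ[𝕜] X'))
  have hb0 : A b = 0 := hb
  have hAx : A x = A a := by rw [← hab]; simp [hb0]
  have hQ : j (A x) x = j (A a) a := by
    have h1 : j (A a) b = 0 := by rw [hA a b, hb0]; simp
    rw [hAx, ← hab]
    simp [h1]
  have h2norm : ‖(2 : 𝕜)⁻¹‖ = (2 : ℝ)⁻¹ := by
    rw [norm_inv]
    norm_num
  have hanorm : ‖a‖ ≤ M * ‖A x‖ := by
    have := hbound ⟨a, ha⟩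
    simpa [hA₀app, hAx] using this
  have hs : ‖(2 : 𝕜)⁻¹ * j (A x) x‖ ≤ K * ‖A x‖ ^ 2 := by
    rw [norm_mul, h2norm, hQ]
    have h1 : ‖j (A a) a‖ ≤ ‖j‖ * ‖A a‖ * ‖a‖ := by
      calc ‖j (A a) a‖ ≤ ‖j (A a)‖ * ‖a‖ := (j (A a)).le_opNorm a
      _ ≤ ‖j‖ * ‖A a‖ * ‖a‖ := by
          gcongr
          exact j.le_opNorm _
    calc (2 : ℝ)⁻¹ * ‖j (A a) a‖ ≤ (2 : ℝ)⁻¹ * (‖j‖ * ‖A a‖ * ‖a‖) := by gcongr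
    _ ≤ (2 : ℝ)⁻¹ * (‖j‖ * ‖A x‖ * (M * ‖A x‖)) := by
        rw [← hAx] at h1 ⊢
        gcongr
    _ = (2⁻¹ * ‖j‖ * M) * ‖A x‖ ^ 2 := by ring
    _ ≤ K * ‖A x‖ ^ 2 := by
        have : (2 : ℝ)⁻¹ * ‖j‖ * M ≤ K := by rw [hKdef]; linarith
        gcongr
  set s := ‖(2 : 𝕜)⁻¹ * j (A x) x‖ with hsdef
  have hs0 : 0 ≤ s := norm_nonneg _
  have hsqrt : s ^ ((1 : ℝ) / 2) = Real.sqrt s := (Real.sqrt_eq_rpow s).symm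
  rw [hsqrt]
  have h1 : Real.sqrt s ≤ Real.sqrt K * ‖A x‖ := by
    calc Real.sqrt s ≤ Real.sqrt (K * ‖A x‖ ^ 2) := Real.sqrt_le_sqrt hs
    _ = Real.sqrt K * ‖A x‖ := by
        rw [Real.sqrt_mul hK0.le, Real.sqrt_sq (norm_nonneg _)]
  calc (Real.sqrt K)⁻¹ * Real.sqrt s ≤ (Real.sqrt K)⁻¹ * (Real.sqrt K * ‖A x‖) := by
        gcongr
  _ = ‖A x‖ := by
        rw [← mul_assoc, inv_mul_cancel₀ (by positivity), one_mul]
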